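/- Let 0 < ρ < 1, 0 < r < 1/ρ and s > 0, and define h(x,y) = Φ(x) − x·log r + Ψ(y) − y·log s for x, y > 0. Then h attains a strict global minimum on (0,∞)² at the unique point (X, Y) = ( ρr/(1−ρr), s ), and the minimum value is h(X,Y) = log(1−ρr) − log(1−ρ) − (s−1). -/

import Mathlib

set_option maxHeartbeats 800000


noncomputable section

open Real Filter Set

/-- `Φ(x) = x log(x/ρ) − (x+1) log(x+1) − log(1−ρ)`. -/
def Phi (ρ x : ℝ) : ℝ :=
  x * Real.log (x / ρ) - (x + 1) * Real.log (x + 1) - Real.log (1 - ρ)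

/-- `Ψ(y) = y log y − y + 1`. -/
def Psi (y : ℝ) : ℝ := y * Real.log y - y + 1

/-- The tilted function `h(x,y) = Φ(x) − x log r + Ψ(y) − y log s`. -/
def htilt (ρ r s : ℝ) (x y : ℝ) : ℝ :=
  Phi ρ x - x * Real.log r + Psi y - y * Real.log s

/-- The tilted rate function has a strict global minimum on `(0,∞)²` at
`(ρr/(1−ρr), s)`, with minimum value `log(1−ρr) − log(1−ρ) − (s−1)`. -/
theorem htilt_strict_global_min (ρ r s : ℝ) (hρ0 : 0 < ρ) (hρ1 : ρ < 1)
    (hr0 : 0 < r) (hr1 : r < 1 / ρ) (hs : 0 < s) :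
    (∀ x y : ℝ, 0 < x → 0 < y → (x, y) ≠ (ρ * r / (1 - ρ * r), s) →
      htilt ρ r s (ρ * r / (1 - ρ * r)) s < htilt ρ r s x y) ∧
    htilt ρ r s (ρ * r / (1 - ρ * r)) s
      = Real.log (1 - ρ * r) - Real.log (1 - ρ) - (s - 1) := by
  have ha0 : (0:ℝ) < ρ * r := mul_pos hρ0 hr0
  have ha1 : ρ * r < 1 := by
    have h := (lt_div_iff₀ hρ0).mp hr1
    nlinarith
  have h1a : (0:ℝ) < 1 - ρ * r := by linarith
  set a := ρ * r with ha
  set X := a / (1 - a) with hX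
  have hX0 : 0 < X := div_pos ha0 h1a
  have hX1 : X + 1 = 1 / (1 - a) := by
    rw [hX]; field_simp; ring
  have hval : htilt ρ r s X s = Real.log (1 - a) - Real.log (1 - ρ) - (s - 1) := by
    have e1 : X / ρ = r * (X + 1) := by
      rw [hX1, hX]; field_simp; ring
    unfold htilt Phi Psi
    rw [e1, Real.log_mul hr0.ne' (by positivity : (0:ℝ) < X + 1).ne', hX1,
        one_div, Real.log_inv]
    rw [hX]
    field_simp
    ring
  refine ⟨?_, hval⟩
  intro x y hx hy hne
  rw [hval]
  -- log facts
  have hx1 : (0:ℝ) < x + 1 := by linarith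
  have hloga : Real.log a = Real.log ρ + Real.log r := Real.log_mul hρ0.ne' hr0.ne'
  have hlogxρ : Real.log (x / ρ) = Real.log x - Real.log ρ := Real.log_div hx.ne' hρ0.ne'
  set Ax := x * (Real.log x - Real.log a) - (x + 1) * Real.log (x + 1) - Real.log (1 - a)
    with hAx
  set By := y * (Real.log y - Real.log s) - y + s with hBy
  -- decomposition
  have hdecomp : htilt ρ r s x y = (Real.log (1 - a) - Real.log (1 - ρ) - (s - 1)) + Ax + By := by
    unfold htilt Phi Psi
    rw [hlogxρ, hAx, hBy, hloga]
    ring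
  -- c := a*(x+1)/x
  have hc : (0:ℝ) < a * (x + 1) / x := by positivity
  have hd : (0:ℝ) < (1 - a) * (x + 1) := by positivity
  have lc : Real.log (a * (x + 1) / x)
      = Real.log a + Real.log (x + 1) - Real.log x := by
    rw [Real.log_div (by positivity) hx.ne', Real.log_mul ha0.ne' hx1.ne']
  have ld : Real.log ((1 - a) * (x + 1)) = Real.log (1 - a) + Real.log (x + 1) :=
    Real.log_mul h1a.ne' hx1.ne'
  have h2 : Real.log (1 - a) + Real.log (x + 1) ≤ (1 - a) * (x + 1) - 1 := by
    rw [← ld]; exact Real.log_le_sub_one_of_pos hd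
  have hxc : x * (a * (x + 1) / x) = a * (x + 1) := by field_simp
  have hAge : 0 ≤ Ax := by
    have h1 := Real.log_le_sub_one_of_pos hc
    have h3 : x * Real.log (a * (x + 1) / x) ≤ a * (x + 1) - x := by
      calc x * Real.log (a * (x + 1) / x) ≤ x * (a * (x + 1) / x - 1) := by
            exact mul_le_mul_of_nonneg_left h1 hx.le
        _ = a * (x + 1) - x := by field_simp
    rw [lc] at h3
    rw [hAx]
    ring_nf at h3 h2 ⊢
    linarith
  have hAgt : x ≠ X → 0 < Ax := by
    intro hxX
    have hcne : a * (x + 1) / x ≠ 1 := by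
      intro h
      apply hxX
      have h' : a * (x + 1) = x := by field_simp at h; linarith
      rw [hX]
      field_simp
      linarith
    have h1 := Real.log_lt_sub_one_of_pos hc hcne
    have h3 : x * Real.log (a * (x + 1) / x) < a * (x + 1) - x := by
      calc x * Real.log (a * (x + 1) / x) < x * (a * (x + 1) / x - 1) := by
            exact mul_lt_mul_of_pos_left h1 hx
        _ = a * (x + 1) - x := by field_simp
    rw [lc] at h3
    rw [hAx]
    ring_nf at h3 h2 ⊢
    linarith
  have hsy : (0:ℝ) < s / y := by positivity
  have lsy : Real.log (s / y) = Real.log s - Real.log y := Real.log_div hs.ne' hy.ne'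
  have hBge : 0 ≤ By := by
    have h1 := Real.log_le_sub_one_of_pos hsy
    have h3 : y * Real.log (s / y) ≤ s - y := by
      calc y * Real.log (s / y) ≤ y * (s / y - 1) := mul_le_mul_of_nonneg_left h1 hy.le
        _ = s - y := by field_simp
    rw [lsy] at h3
    rw [hBy]
    ring_nf at h3 ⊢
    linarith
  have hBgt : y ≠ s → 0 < By := by
    intro hys
    have hne1 : s / y ≠ 1 := by
      intro h; apply hys; field_simp at h; linarith
    have h1 := Real.log_lt_sub_one_of_pos hsy hne1
    have h3 : y * Real.log (s / y) < s - y := by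
      calc y * Real.log (s / y) < y * (s / y - 1) := mul_lt_mul_of_pos_left h1 hy
        _ = s - y := by field_simp
    rw [lsy] at h3
    rw [hBy]
    ring_nf at h3 ⊢
    linarith
  rw [hdecomp]
  by_cases hxX : x = X
  · have hys : y ≠ s := by
      intro h; exact hne (by rw [hxX, h])
    have := hBgt hys
    linarith
  · have := hAgt hxX
    linarith
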